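/- The toric ideal I_A, i.e. the kernel of the map φ sending a↦t_1t_2t_3, b↦t_1t_2t_4, c↦t_1t_3t_4, d↦t_2t_3t_4, e↦t_1²t_2, f↦t_1t_2², g↦t_3²t_4, h↦t_3t_4², is generated by the eight binomials ab−cf, ac−eg, ad−fg, ah−cd, bg−cd, cf−de, eh−bc, fh−bd. -/

import Mathlib

open MvPolynomial

/-- The monomials defining the toric map:
`a ↦ t₁t₂t₃, b ↦ t₁t₂t₄, c ↦ t₁t₃t₄, d ↦ t₂t₃t₄, e ↦ t₁²t₂, f ↦ t₁t₂², g ↦ t₃²t₄, h ↦ t₃t₄²`. -/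
noncomputable def phiMon : Fin 8 → MvPolynomial (Fin 4) ℚ
  | 0 => X 0 * X 1 * X 2
  | 1 => X 0 * X 1 * X 3
  | 2 => X 0 * X 2 * X 3
  | 3 => X 1 * X 2 * X 3
  | 4 => X 0 ^ 2 * X 1
  | 5 => X 0 * X 1 ^ 2
  | 6 => X 2 ^ 2 * X 3
  | 7 => X 2 * X 3 ^ 2

/-- The monoid-algebra homomorphism `ℚ[a,…,h] → ℚ[t₁,…,t₄]` of the support set `A`. -/
noncomputable def phiA : MvPolynomial (Fin 8) ℚ →ₐ[ℚ] MvPolynomial (Fin 4) ℚ :=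
  aeval phiMon

/-! ### Auxiliary machinery -/

/-- The toric ideal generators. -/
noncomputable def JA : Ideal (MvPolynomial (Fin 8) ℚ) :=
  Ideal.span {X 0 * X 1 - X 2 * X 5, X 0 * X 2 - X 4 * X 6,
    X 0 * X 3 - X 5 * X 6, X 0 * X 7 - X 2 * X 3, X 1 * X 6 - X 2 * X 3,
    X 2 * X 5 - X 3 * X 4, X 4 * X 7 - X 1 * X 2, X 5 * X 7 - X 1 * X 3}

/-- The exponent vectors of the eight monomials. -/
noncomputable def Acol : Fin 8 → (Fin 4 →₀ ℕ)
  | 0 => Finsupp.single 0 1 + Finsupp.single 1 1 + Finsupp.single 2 1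
  | 1 => Finsupp.single 0 1 + Finsupp.single 1 1 + Finsupp.single 3 1
  | 2 => Finsupp.single 0 1 + Finsupp.single 2 1 + Finsupp.single 3 1
  | 3 => Finsupp.single 1 1 + Finsupp.single 2 1 + Finsupp.single 3 1
  | 4 => Finsupp.single 0 2 + Finsupp.single 1 1
  | 5 => Finsupp.single 0 1 + Finsupp.single 1 2
  | 6 => Finsupp.single 2 2 + Finsupp.single 3 1
  | 7 => Finsupp.single 2 1 + Finsupp.single 3 2

lemma phiMon_eq (i : Fin 8) : phiMon i = monomial (Acol i) 1 := by
  have hX : ∀ n : Fin 4, (X n : MvPolynomial (Fin 4) ℚ) = monomial (Finsupp.single n 1) 1 := fun n => rfl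
  fin_cases i <;>
    simp [phiMon, Acol, hX, X_pow_eq_monomial, monomial_mul, monomial_pow, one_pow, Finsupp.smul_single]

/-- The linear map on exponents. -/
noncomputable def Amap (u : Fin 8 →₀ ℕ) : Fin 4 →₀ ℕ := u.sum fun i k => k • Acol i

lemma Amap_zero : Amap 0 = 0 := Finsupp.sum_zero_index

lemma Amap_add (u v : Fin 8 →₀ ℕ) : Amap (u + v) = Amap u + Amap v :=
  Finsupp.sum_add_index (by simp) (by intros; rw [add_smul])

lemma Amap_single (i : Fin 8) (k : ℕ) : Amap (Finsupp.single i k) = k • Acol i :=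
  Finsupp.sum_single_index (by simp)

lemma phi_monomial (u : Fin 8 →₀ ℕ) : phiA (monomial u 1) = monomial (Amap u) 1 := by
  induction u using Finsupp.induction with
  | zero => simp [Amap_zero, phiA]
  | single_add a b f _ hb ih =>
    have h1 : monomial (Finsupp.single a b + f) (1:ℚ) =
        monomial (Finsupp.single a b) 1 * monomial f 1 := by
      rw [monomial_mul, one_mul]
    have h2 : phiA (monomial (Finsupp.single a b) (1:ℚ)) = monomial (b • Acol a) 1 := by
      rw [← X_pow_eq_monomial, map_pow]
      have : phiA (X a) = phiMon a := aeval_X _ _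
      rw [this, phiMon_eq, monomial_pow, one_pow]
    rw [h1, map_mul, h2, ih, monomial_mul, one_mul, Amap_add, Amap_single]

lemma phi_monomial' (u : Fin 8 →₀ ℕ) (c : ℚ) : phiA (monomial u c) = monomial (Amap u) c := by
  have : monomial u c = C c * monomial u 1 := by rw [C_mul_monomial, mul_one]
  rw [this, map_mul, phi_monomial, algHom_C, algebraMap_eq, C_mul_monomial, mul_one]

lemma Amap_apply (u : Fin 8 →₀ ℕ) (t : Fin 4) :
    Amap u t = ∑ i : Fin 8, u i * Acol i t := by
  rw [Amap, Finsupp.sum_apply]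
  rw [Finsupp.sum_fintype]
  · exact Finset.sum_congr rfl fun i _ => by simp
  · intro i; simp

lemma Amap_coord (u : Fin 8 →₀ ℕ) :
    Amap u 0 = u 0 + u 1 + u 2 + 2 * u 4 + u 5 ∧
    Amap u 1 = u 0 + u 1 + u 3 + u 4 + 2 * u 5 ∧
    Amap u 2 = u 0 + u 2 + u 3 + 2 * u 6 + u 7 ∧
    Amap u 3 = u 1 + u 2 + u 3 + u 6 + 2 * u 7 := by
  refine ⟨?_, ?_, ?_, ?_⟩ <;>
  · rw [Amap_apply, Fin.sum_univ_eight]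
    simp [Acol, Finsupp.single_apply]
    ring

/-! ### Standard monomials and injectivity -/

def Std (u : Fin 8 → ℕ) : Prop :=
  (u 0 = 0 ∨ u 1 = 0) ∧ (u 0 = 0 ∨ u 2 = 0) ∧ (u 0 = 0 ∨ u 3 = 0) ∧
  (u 0 = 0 ∨ u 7 = 0) ∧ (u 1 = 0 ∨ u 6 = 0) ∧ (u 2 = 0 ∨ u 5 = 0) ∧
  (u 4 = 0 ∨ u 7 = 0) ∧ (u 5 = 0 ∨ u 7 = 0)

lemma cases_of_std' (u0 u1 u2 u3 u4 u5 u6 u7 : ℕ)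
    (h1 : u0 = 0 ∨ u1 = 0) (h2 : u0 = 0 ∨ u2 = 0) (h3 : u0 = 0 ∨ u3 = 0)
    (h4 : u0 = 0 ∨ u7 = 0) (h5 : u1 = 0 ∨ u6 = 0) (h6 : u2 = 0 ∨ u5 = 0)
    (h7 : u4 = 0 ∨ u7 = 0) (h8 : u5 = 0 ∨ u7 = 0) :
    (u1 = 0 ∧ u2 = 0 ∧ u3 = 0 ∧ u7 = 0) ∨
    (u0 = 0 ∧ u1 = 0 ∧ u4 = 0 ∧ u5 = 0) ∨
    (u0 = 0 ∧ u6 = 0 ∧ u4 = 0 ∧ u5 = 0) ∨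
    (u0 = 0 ∧ u7 = 0 ∧ u1 = 0 ∧ u2 = 0) ∨
    (u0 = 0 ∧ u7 = 0 ∧ u1 = 0 ∧ u5 = 0) ∨
    (u0 = 0 ∧ u7 = 0 ∧ u6 = 0 ∧ u2 = 0) ∨
    (u0 = 0 ∧ u7 = 0 ∧ u6 = 0 ∧ u5 = 0) := by
  by_cases h0 : u0 = 0
  · by_cases hh : u7 = 0
    · rcases h5 with hb | hg <;> rcases h6 with hc | hf
      · exact Or.inr (Or.inr (Or.inr (Or.inl ⟨h0, hh, hb, hc⟩)))
      · exact Or.inr (Or.inr (Or.inr (Or.inr (Or.inl ⟨h0, hh, hb, hf⟩))))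
      · exact Or.inr (Or.inr (Or.inr (Or.inr (Or.inr (Or.inl ⟨h0, hh, hg, hc⟩)))))
      · exact Or.inr (Or.inr (Or.inr (Or.inr (Or.inr (Or.inr ⟨h0, hh, hg, hf⟩)))))
    · have he : u4 = 0 := h7.resolve_right hh
      have hf : u5 = 0 := h8.resolve_right hh
      rcases h5 with hb | hg
      · exact Or.inr (Or.inl ⟨h0, hb, he, hf⟩)
      · exact Or.inr (Or.inr (Or.inl ⟨h0, hg, he, hf⟩))
  · exact Or.inl ⟨h1.resolve_left h0, h2.resolve_left h0, h3.resolve_left h0, h4.resolve_left h0⟩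

set_option maxHeartbeats 2000000 in
lemma inj_aux' (u0 u1 u2 u3 u4 u5 u6 u7 w0 w1 w2 w3 w4 w5 w6 w7 : ℕ)
    (hu1 : u0 = 0 ∨ u1 = 0) (hu2 : u0 = 0 ∨ u2 = 0) (hu3 : u0 = 0 ∨ u3 = 0)
    (hu4 : u0 = 0 ∨ u7 = 0) (hu5 : u1 = 0 ∨ u6 = 0) (hu6 : u2 = 0 ∨ u5 = 0)
    (hu7 : u4 = 0 ∨ u7 = 0) (hu8 : u5 = 0 ∨ u7 = 0)
    (hw1 : w0 = 0 ∨ w1 = 0) (hw2 : w0 = 0 ∨ w2 = 0) (hw3 : w0 = 0 ∨ w3 = 0)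
    (hw4 : w0 = 0 ∨ w7 = 0) (hw5 : w1 = 0 ∨ w6 = 0) (hw6 : w2 = 0 ∨ w5 = 0)
    (hw7 : w4 = 0 ∨ w7 = 0) (hw8 : w5 = 0 ∨ w7 = 0)
    (e1 : u0 + u1 + u2 + 2 * u4 + u5 = w0 + w1 + w2 + 2 * w4 + w5)
    (e2 : u0 + u1 + u3 + u4 + 2 * u5 = w0 + w1 + w3 + w4 + 2 * w5)
    (e3 : u0 + u2 + u3 + 2 * u6 + u7 = w0 + w2 + w3 + 2 * w6 + w7)
    (e4 : u1 + u2 + u3 + u6 + 2 * u7 = w1 + w2 + w3 + w6 + 2 * w7) :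
    u0 = w0 ∧ u1 = w1 ∧ u2 = w2 ∧ u3 = w3 ∧ u4 = w4 ∧ u5 = w5 ∧ u6 = w6 ∧ u7 = w7 := by
  rcases cases_of_std' u0 u1 u2 u3 u4 u5 u6 u7 hu1 hu2 hu3 hu4 hu5 hu6 hu7 hu8 with h|h|h|h|h|h|h <;>
    rcases cases_of_std' w0 w1 w2 w3 w4 w5 w6 w7 hw1 hw2 hw3 hw4 hw5 hw6 hw7 hw8 with g|g|g|g|g|g|g <;>
    (obtain ⟨a1,a2,a3,a4⟩ := h; obtain ⟨b1,b2,b3,b4⟩ := g;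
     subst a1 a2 a3 a4 b1 b2 b3 b4;
     clear hu1 hu2 hu3 hu4 hu5 hu6 hu7 hu8 hw1 hw2 hw3 hw4 hw5 hw6 hw7 hw8; omega)

lemma Amap_inj_std (u w : Fin 8 →₀ ℕ) (hu : Std ⇑u) (hw : Std ⇑w) (h : Amap u = Amap w) :
    u = w := by
  obtain ⟨hu1, hu2, hu3, hu4, hu5, hu6, hu7, hu8⟩ := hu
  obtain ⟨hw1, hw2, hw3, hw4, hw5, hw6, hw7, hw8⟩ := hw
  obtain ⟨a0, a1, a2, a3⟩ := Amap_coord u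
  obtain ⟨b0, b1, b2, b3⟩ := Amap_coord w
  have e0 : Amap u 0 = Amap w 0 := by rw [h]
  have e1 : Amap u 1 = Amap w 1 := by rw [h]
  have e2 : Amap u 2 = Amap w 2 := by rw [h]
  have e3 : Amap u 3 = Amap w 3 := by rw [h]
  rw [a0, b0] at e0; rw [a1, b1] at e1; rw [a2, b2] at e2; rw [a3, b3] at e3
  obtain ⟨g0, g1, g2, g3, g4, g5, g6, g7⟩ :=
    inj_aux' (u 0) (u 1) (u 2) (u 3) (u 4) (u 5) (u 6) (u 7)
      (w 0) (w 1) (w 2) (w 3) (w 4) (w 5) (w 6) (w 7)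
      hu1 hu2 hu3 hu4 hu5 hu6 hu7 hu8 hw1 hw2 hw3 hw4 hw5 hw6 hw7 hw8 e0 e1 e2 e3
  ext i
  fin_cases i
  · exact g0
  · exact g1
  · exact g2
  · exact g3
  · exact g4
  · exact g5
  · exact g6
  · exact g7

lemma phi_inj_std (q : MvPolynomial (Fin 8) ℚ) (hq : ∀ u ∈ q.support, Std ⇑u)
    (h0 : phiA q = 0) : q = 0 := by
  have hq0 : phiA q = ∑ u ∈ q.support, monomial (Amap u) (coeff u q) := by
    conv_lhs => rw [as_sum q]
    rw [map_sum]
    exact Finset.sum_congr rfl fun u _ => phi_monomial' u (coeff u q)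
  have key : ∀ u₀ ∈ q.support, coeff u₀ q = 0 := by
    intro u₀ h₀
    have hs : ∑ u ∈ q.support, monomial (Amap u) (coeff u q) = 0 := by rw [← hq0, h0]
    have hc := congrArg (coeff (Amap u₀)) hs
    rw [coeff_sum] at hc
    simp only [coeff_monomial, coeff_zero] at hc
    rwa [Finset.sum_eq_single u₀
      (fun b hb hbne => by
        rw [if_neg]
        intro hAb
        exact hbne (Amap_inj_std b u₀ (hq b hb) (hq u₀ h₀) hAb))
      (fun habs => absurd h₀ habs), if_pos rfl] at hc
  ext v
  by_cases hv : v ∈ q.support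
  · rw [key v hv, coeff_zero]
  · rw [notMem_support_iff.mp hv, coeff_zero]

/-! ### Reduction to normal form -/

lemma exists_decomp (u : Fin 8 →₀ ℕ) (i j : Fin 8) (hij : i ≠ j)
    (hi : u i ≠ 0) (hj : u j ≠ 0) :
    ∃ v, u = v + Finsupp.single i 1 + Finsupp.single j 1 := by
  refine ⟨u - Finsupp.single i 1 - Finsupp.single j 1, ?_⟩
  ext a
  simp only [Finsupp.add_apply, Finsupp.tsub_apply, Finsupp.single_apply]
  split_ifs with h1 h2 h2
  · exact absurd (h1.trans h2.symm) hij
  · have : u a ≠ 0 := h1 ▸ hi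
    omega
  · have : u a ≠ 0 := h2 ▸ hj
    omega
  · omega

lemma rule_step (v : Fin 8 →₀ ℕ) (i j k l : Fin 8) {J : Ideal (MvPolynomial (Fin 8) ℚ)}
    (hgen : (X i * X j - X k * X l : MvPolynomial (Fin 8) ℚ) ∈ J) :
    (monomial (v + Finsupp.single i 1 + Finsupp.single j 1) (1:ℚ))
      - monomial (v + Finsupp.single k 1 + Finsupp.single l 1) 1 ∈ J := by
  have hX : ∀ n : Fin 8, (X n : MvPolynomial (Fin 8) ℚ) = monomial (Finsupp.single n 1) 1 :=
    fun n => rfl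
  have key : (monomial (v + Finsupp.single i 1 + Finsupp.single j 1) (1:ℚ))
      - monomial (v + Finsupp.single k 1 + Finsupp.single l 1) 1
      = monomial v 1 * (X i * X j - X k * X l) := by
    rw [mul_sub, hX i, hX j, hX k, hX l, monomial_mul, monomial_mul, monomial_mul, monomial_mul]
    ring_nf
    rw [add_assoc, add_assoc]
  rw [key]
  exact Ideal.mul_mem_left _ _ hgen

/-- The termination weight. -/
def wtF (u : Fin 8 →₀ ℕ) : ℕ := u 0 + 2 * u 1 + u 2 + 4 * u 7

lemma step_case {n : ℕ}
    (ih : ∀ u : Fin 8 →₀ ℕ, wtF u < n →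
      ∃ w : Fin 8 →₀ ℕ, Std ⇑w ∧ (monomial u (1:ℚ) - monomial w 1) ∈ JA)
    (u : Fin 8 →₀ ℕ) (hn : wtF u < n + 1) (i j k l : Fin 8) (hij : i ≠ j)
    (hi : u i ≠ 0) (hj : u j ≠ 0)
    (hgen : (X i * X j - X k * X l : MvPolynomial (Fin 8) ℚ) ∈ JA)
    (hwt : ∀ v : Fin 8 →₀ ℕ,
      wtF (v + Finsupp.single k 1 + Finsupp.single l 1) <
      wtF (v + Finsupp.single i 1 + Finsupp.single j 1)) :
    ∃ w : Fin 8 →₀ ℕ, Std ⇑w ∧ (monomial u (1:ℚ) - monomial w 1) ∈ JA := by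
  obtain ⟨v, rfl⟩ := exists_decomp u i j hij hi hj
  obtain ⟨w, hw, hmem⟩ := ih (v + Finsupp.single k 1 + Finsupp.single l 1)
    (lt_of_lt_of_le (hwt v) (Nat.lt_succ_iff.mp hn))
  refine ⟨w, hw, ?_⟩
  have h1 := rule_step v i j k l hgen
  have := JA.add_mem h1 hmem
  rwa [sub_add_sub_cancel] at this

set_option maxHeartbeats 1000000 in
lemma nf_exists : ∀ u : Fin 8 →₀ ℕ,
    ∃ w : Fin 8 →₀ ℕ, Std ⇑w ∧ (monomial u (1:ℚ) - monomial w 1) ∈ JA := by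
  suffices H : ∀ (n : ℕ) (u : Fin 8 →₀ ℕ), wtF u < n →
      ∃ w : Fin 8 →₀ ℕ, Std ⇑w ∧ (monomial u (1:ℚ) - monomial w 1) ∈ JA by
    exact fun u => H (wtF u + 1) u (Nat.lt_succ_self _)
  intro n
  induction n with
  | zero => exact fun u h => absurd h (Nat.not_lt_zero _)
  | succ n ih =>
    intro u hn
    by_cases h1 : u 0 = 0 ∨ u 1 = 0
    · by_cases h2 : u 0 = 0 ∨ u 2 = 0
      · by_cases h3 : u 0 = 0 ∨ u 3 = 0
        · by_cases h4 : u 0 = 0 ∨ u 7 = 0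
          · by_cases h5 : u 1 = 0 ∨ u 6 = 0
            · by_cases h6 : u 2 = 0 ∨ u 5 = 0
              · by_cases h7 : u 4 = 0 ∨ u 7 = 0
                · by_cases h8 : u 5 = 0 ∨ u 7 = 0
                  · exact ⟨u, ⟨h1, h2, h3, h4, h5, h6, h7, h8⟩, by simp⟩
                  · push_neg at h8
                    exact step_case ih u hn 5 7 1 3 (by decide) h8.1 h8.2
                      (Ideal.subset_span (by simp))
                      (by intro v; simp [wtF, Finsupp.add_apply, Finsupp.single_apply] <;> omega)
                · push_neg at h7
                  exact step_case ih u hn 4 7 1 2 (by decide) h7.1 h7.2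
                    (Ideal.subset_span (by simp))
                    (by intro v; simp [wtF, Finsupp.add_apply, Finsupp.single_apply] <;> omega)
              · push_neg at h6
                exact step_case ih u hn 2 5 3 4 (by decide) h6.1 h6.2
                  (Ideal.subset_span (by simp))
                  (by intro v; simp [wtF, Finsupp.add_apply, Finsupp.single_apply] <;> omega)
            · push_neg at h5
              exact step_case ih u hn 1 6 2 3 (by decide) h5.1 h5.2
                (Ideal.subset_span (by simp))
                (by intro v; simp [wtF, Finsupp.add_apply, Finsupp.single_apply] <;> omega)
          · push_neg at h4
            exact step_case ih u hn 0 7 2 3 (by decide) h4.1 h4.2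
              (Ideal.subset_span (by simp))
              (by intro v; simp [wtF, Finsupp.add_apply, Finsupp.single_apply] <;> omega)
        · push_neg at h3
          exact step_case ih u hn 0 3 5 6 (by decide) h3.1 h3.2
            (Ideal.subset_span (by simp))
            (by intro v; simp [wtF, Finsupp.add_apply, Finsupp.single_apply] <;> omega)
      · push_neg at h2
        exact step_case ih u hn 0 2 4 6 (by decide) h2.1 h2.2
          (Ideal.subset_span (by simp))
          (by intro v; simp [wtF, Finsupp.add_apply, Finsupp.single_apply] <;> omega)
    · push_neg at h1
      exact step_case ih u hn 0 1 2 5 (by decide) h1.1 h1.2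
        (Ideal.subset_span (by simp))
        (by intro v; simp [wtF, Finsupp.add_apply, Finsupp.single_apply] <;> omega)

lemma span_le_ker : JA ≤ RingHom.ker phiA.toRingHom := by
  rw [JA, Ideal.span_le]
  rintro x hx
  simp only [Set.mem_insert_iff, Set.mem_singleton_iff] at hx
  have hmem : ∀ y : MvPolynomial (Fin 8) ℚ, phiA y = 0 → y ∈ RingHom.ker phiA.toRingHom :=
    fun y hy => by rwa [RingHom.mem_ker]
  rcases hx with rfl | rfl | rfl | rfl | rfl | rfl | rfl | rfl <;>
    refine hmem _ ?_ <;>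
    · simp only [map_sub, map_mul, phiA, aeval_X, phiMon]
      ring

theorem stmt10' : RingHom.ker phiA.toRingHom = JA := by
  refine le_antisymm ?_ span_le_ker
  intro p hp
  rw [RingHom.mem_ker] at hp
  have hp' : phiA p = 0 := hp
  choose nf hstd hmem using nf_exists
  set q := ∑ u ∈ p.support, monomial (nf u) (coeff u p) with hq
  have hpq : p - q ∈ JA := by
    have hrw : p - q = ∑ u ∈ p.support,
        (monomial u (coeff u p) - monomial (nf u) (coeff u p)) := by
      rw [Finset.sum_sub_distrib, ← as_sum]
    rw [hrw]
    refine Ideal.sum_mem _ fun u _ => ?_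
    have hmul : monomial u (coeff u p) - monomial (nf u) (coeff u p)
        = C (coeff u p) * (monomial u 1 - monomial (nf u) 1) := by
      simp [mul_sub, C_mul_monomial]
    rw [hmul]
    exact Ideal.mul_mem_left _ _ (hmem u)
  have hq0 : phiA q = 0 := by
    have h1 := span_le_ker hpq
    rw [RingHom.mem_ker] at h1
    have h1' : phiA (p - q) = 0 := h1
    rw [map_sub, hp', zero_sub, neg_eq_zero] at h1'
    exact h1'
  have hqstd : ∀ v ∈ q.support, Std ⇑v := by
    intro v hv
    rw [hq] at hv
    have h2 := support_sum hv
    rw [Finset.mem_biUnion] at h2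
    obtain ⟨u, _, hvu⟩ := h2
    have h3 := support_monomial_subset hvu
    rw [Finset.mem_singleton] at h3
    rw [h3]
    exact hstd u
  have hqz : q = 0 := phi_inj_std q hqstd hq0
  rw [hqz, sub_zero] at hpq
  exact hpq

/-- The toric ideal `I_A = ker φ` is generated by the eight binomials
`ab−cf, ac−eg, ad−fg, ah−cd, bg−cd, cf−de, eh−bc, fh−bd`
(the variables `a,…,h` are `X 0, …, X 7`). -/
theorem stmt10 :
    RingHom.ker phiA.toRingHom =
      Ideal.span {X 0 * X 1 - X 2 * X 5, X 0 * X 2 - X 4 * X 6,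
        X 0 * X 3 - X 5 * X 6, X 0 * X 7 - X 2 * X 3, X 1 * X 6 - X 2 * X 3,
        X 2 * X 5 - X 3 * X 4, X 4 * X 7 - X 1 * X 2, X 5 * X 7 - X 1 * X 3} := by
  exact stmt10'
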